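/- arXiv:2010.00817 — 2 statements merged into one kernel-verified Lean document; each statement's English description precedes it below -/
import Mathlib

section
/- Let F : ℝ^d → ℝ be differentiable with L_Ω-Lipschitz gradient, let R : ℝ^d → ℝ be lower semicontinuous and convex, and set P = F + R. Let A ∈ ℝ^{d×d} be symmetric positive definite, ζ ∈ ℝ^d, and w' = prox_R^{A^{-1}}(w − Aζ) for some w ∈ ℝ^d. Then for every z ∈ ℝ^d, P(w') ≤ P(z) + ⟨w' − z, ∇F(w) − ζ⟩ + (1/2)(w' − w)ᵀ(L_Ω I − A^{-1})(w' − w) + (1/2)(z − w)ᵀ(L_Ω I + A^{-1})(z − w) − (1/2)‖w' − z‖_{A^{-1}}². -/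
open scoped BigOperators RealInnerProductSpace

/-- `ℝ^d` as Euclidean space. -/
abbrev Euc (d : ℕ) := EuclideanSpace ℝ (Fin d)

/-- Action of a `d × d` real matrix on a vector of `ℝ^d`. -/
noncomputable def mdot {d : ℕ} (M : Matrix (Fin d) (Fin d) ℝ) (x : Euc d) : Euc d :=
  Matrix.toEuclideanLin M x

/-- The quadratic form `‖x‖_M² = xᵀ M x` associated with a matrix `M`. -/
noncomputable def qf {d : ℕ} (M : Matrix (Fin d) (Fin d) ℝ) (x : Euc d) : ℝ :=
  ⟪x, mdot M x⟫

/-- `u` is a point of the scaled proximal operator `prox_R^M (w)`, i.e. a minimizer of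
`y ↦ (1/2)‖y - w‖_M² + R y`, for a real-valued `R`. -/
def IsProxR {d : ℕ} (R : Euc d → ℝ) (M : Matrix (Fin d) (Fin d) ℝ) (w u : Euc d) : Prop :=
  ∀ y, 2⁻¹ * qf M (u - w) + R u ≤ 2⁻¹ * qf M (y - w) + R y

section Helpers

variable {d : ℕ}

lemma mdot_vadd (M : Matrix (Fin d) (Fin d) ℝ) (x y : Euc d) :
    mdot M (x + y) = mdot M x + mdot M y := map_add _ _ _

lemma mdot_vsmul (M : Matrix (Fin d) (Fin d) ℝ) (t : ℝ) (x : Euc d) :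
    mdot M (t • x) = t • mdot M x := map_smul _ _ _

lemma mdot_one (x : Euc d) : mdot (1 : Matrix (Fin d) (Fin d) ℝ) x = x := by
  ext i; simp [mdot, Matrix.toEuclideanLin_apply]

lemma mdot_mul (M N : Matrix (Fin d) (Fin d) ℝ) (x : Euc d) :
    mdot (M * N) x = mdot M (mdot N x) := by
  ext i; simp [mdot, Matrix.toEuclideanLin_apply, Matrix.mulVec_mulVec]

lemma mdot_madd (M N : Matrix (Fin d) (Fin d) ℝ) (x : Euc d) :
    mdot (M + N) x = mdot M x + mdot N x := by
  show Matrix.toEuclideanLin (M + N) x = _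
  rw [map_add]; rfl

lemma mdot_msub (M N : Matrix (Fin d) (Fin d) ℝ) (x : Euc d) :
    mdot (M - N) x = mdot M x - mdot N x := by
  show Matrix.toEuclideanLin (M - N) x = _
  rw [map_sub]; rfl

lemma mdot_msmul (c : ℝ) (M : Matrix (Fin d) (Fin d) ℝ) (x : Euc d) :
    mdot (c • M) x = c • mdot M x := by
  show Matrix.toEuclideanLin (c • M) x = _
  rw [map_smul]; rfl

lemma qf_nonneg {M : Matrix (Fin d) (Fin d) ℝ} (hM : M.PosSemidef) (x : Euc d) :
    0 ≤ qf M x := by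
  have := hM.re_dotProduct_nonneg (x : Fin d → ℝ)
  simpa [qf, mdot, dotProduct, PiLp.inner_apply, Matrix.toEuclideanLin_apply, mul_comm] using this

lemma inner_mdot_comm {M : Matrix (Fin d) (Fin d) ℝ} (hM : M.IsHermitian) (x y : Euc d) :
    ⟪x, mdot M y⟫ = ⟪y, mdot M x⟫ := by
  have h := (Matrix.isHermitian_iff_isSymmetric.mp hM) x y
  rw [show mdot M y = Matrix.toEuclideanLin M y from rfl, ← h, real_inner_comm]; rfl

lemma qf_add_smul {M : Matrix (Fin d) (Fin d) ℝ} (hM : M.IsHermitian) (a u : Euc d) (t : ℝ) :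
    qf M (a + t • u) = qf M a + 2 * t * ⟪u, mdot M a⟫ + t ^ 2 * qf M u := by
  simp only [qf, mdot_vadd, mdot_vsmul, inner_add_left, inner_add_right, inner_smul_left,
    inner_smul_right, RCLike.star_def, conj_trivial]
  rw [inner_mdot_comm hM a u]
  ring

lemma qf_sub_eq {M : Matrix (Fin d) (Fin d) ℝ} (hM : M.IsHermitian) (a b : Euc d) :
    qf M (a - b) = qf M a - 2 * ⟪b, mdot M a⟫ + qf M b := by
  have h := qf_add_smul hM a b (-1)
  have e : a + (-1 : ℝ) • b = a - b := by
    rw [neg_one_smul]; abel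
  rw [e] at h
  rw [h]; ring

lemma qf_smul_one_add (L : ℝ) (B : Matrix (Fin d) (Fin d) ℝ) (x : Euc d) :
    qf (L • (1 : Matrix (Fin d) (Fin d) ℝ) + B) x = L * ‖x‖ ^ 2 + qf B x := by
  simp only [qf, mdot_madd, mdot_msmul, mdot_one, inner_add_right, inner_smul_right]
  rw [real_inner_self_eq_norm_sq]

lemma qf_smul_one_sub (L : ℝ) (B : Matrix (Fin d) (Fin d) ℝ) (x : Euc d) :
    qf (L • (1 : Matrix (Fin d) (Fin d) ℝ) - B) x = L * ‖x‖ ^ 2 - qf B x := by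
  simp only [qf, mdot_msub, mdot_msmul, mdot_one, inner_sub_right, inner_smul_right]
  rw [real_inner_self_eq_norm_sq]

theorem descent_lemma (F : Euc d → ℝ) (gF : Euc d → Euc d)
    (hF : ∀ x, HasGradientAt F (gF x) x)
    (L : ℝ) (hLip : ∀ x y, ‖gF x - gF y‖ ≤ L * ‖x - y‖) (x y : Euc d) :
    F y ≤ F x + ⟪gF x, y - x⟫ + L / 2 * ‖y - x‖ ^ 2 := by
  set u := y - x with hu
  set φ : ℝ → ℝ := fun t => F (x + t • u) - t * ⟪gF x, u⟫ - t ^ 2 * (L / 2 * ‖u‖ ^ 2) with hφ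
  have hd : ∀ t : ℝ, HasDerivAt φ
      (⟪gF (x + t • u), u⟫ - ⟪gF x, u⟫ - 2 * t * (L / 2 * ‖u‖ ^ 2)) t := by
    intro t
    have hline : HasDerivAt (fun t : ℝ => x + t • u) u t := by
      simpa using ((hasDerivAt_id t).smul_const u).const_add x
    have hcomp : HasDerivAt (fun t : ℝ => F (x + t • u)) ⟪gF (x + t • u), u⟫ t := by
      have := (hF (x + t • u)).hasFDerivAt.comp_hasDerivAt t hline
      simpa [InnerProductSpace.toDual_apply_apply, Function.comp_def] using this
    have h2 : HasDerivAt (fun t : ℝ => t * ⟪gF x, u⟫) ⟪gF x, u⟫ t := by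
      simpa using (hasDerivAt_id t).mul_const ⟪gF x, u⟫
    have h3 : HasDerivAt (fun t : ℝ => t ^ 2 * (L / 2 * ‖u‖ ^ 2)) (2 * t * (L / 2 * ‖u‖ ^ 2)) t := by
      simpa using (hasDerivAt_pow 2 t).mul_const (L / 2 * ‖u‖ ^ 2)
    exact (hcomp.sub h2).sub h3
  have hmono : AntitoneOn φ (Set.Icc 0 1) := by
    apply antitoneOn_of_deriv_nonpos (convex_Icc 0 1)
    · exact fun t _ => ((hd t).differentiableAt).continuousAt.continuousWithinAt
    · exact fun t _ => ((hd t).differentiableAt).differentiableWithinAt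
    · intro t ht
      rw [interior_Icc] at ht
      rw [(hd t).deriv]
      have h1 : ⟪gF (x + t • u), u⟫ - ⟪gF x, u⟫ = ⟪gF (x + t • u) - gF x, u⟫ := by
        rw [inner_sub_left]
      have h2 : ⟪gF (x + t • u) - gF x, u⟫ ≤ ‖gF (x + t • u) - gF x‖ * ‖u‖ :=
        real_inner_le_norm _ _
      have h3 : ‖gF (x + t • u) - gF x‖ ≤ L * ‖t • u‖ := by
        simpa using hLip (x + t • u) x
      have h4 : ‖t • u‖ = t * ‖u‖ := by
        rw [norm_smul, Real.norm_eq_abs, abs_of_pos ht.1]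
      have h5 := mul_le_mul_of_nonneg_right h3 (norm_nonneg u)
      rw [h4] at h5
      nlinarith [h1, h2, h5]
  have := hmono (Set.left_mem_Icc.mpr zero_le_one) (Set.right_mem_Icc.mpr zero_le_one) zero_le_one
  have hx1 : x + (1 : ℝ) • u = y := by simp [hu]
  have e0 : φ 0 = F x := by simp only [hφ]; norm_num
  have e1 : φ 1 = F y - ⟪gF x, u⟫ - L / 2 * ‖u‖ ^ 2 := by
    simp only [hφ, hx1, one_pow, one_mul]
  rw [e0, e1] at this
  linarith

theorem prox_key (R : Euc d → ℝ) (hconv : ConvexOn ℝ Set.univ R)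
    (B : Matrix (Fin d) (Fin d) ℝ) (hB : B.PosDef) (v u' : Euc d)
    (hprox : IsProxR R B v u') (z : Euc d) :
    0 ≤ ⟪z - u', mdot B (u' - v)⟫ + R z - R u' := by
  set K := ⟪z - u', mdot B (u' - v)⟫ + R z - R u' with hK
  set q := qf B (z - u') with hq'
  have hq : 0 ≤ q := qf_nonneg hB.posSemidef _
  have ht : ∀ t : ℝ, 0 < t → t ≤ 1 → 0 ≤ K + t / 2 * q := by
    intro t ht0 ht1
    have hmem := hprox (u' + t • (z - u'))
    have e1 : u' + t • (z - u') - v = (u' - v) + t • (z - u') := by abel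
    have e2 : qf B ((u' - v) + t • (z - u'))
        = qf B (u' - v) + 2 * t * ⟪z - u', mdot B (u' - v)⟫ + t ^ 2 * q :=
      qf_add_smul hB.isHermitian _ _ _
    have e3 : (1 - t) • u' + t • z = u' + t • (z - u') := by module
    have hcx : R (u' + t • (z - u')) ≤ (1 - t) * R u' + t * R z := by
      have := hconv.2 (Set.mem_univ u') (Set.mem_univ z)
        (by linarith : (0:ℝ) ≤ 1 - t) ht0.le (by ring)
      rwa [e3] at this
    rw [e1, e2] at hmem
    have h6 : 0 ≤ t * (K + t / 2 * q) := by
      have := hmem.trans (by linarith : 2⁻¹ * (qf B (u' - v) + 2 * t * ⟪z - u', mdot B (u' - v)⟫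
        + t ^ 2 * q) + R (u' + t • (z - u')) ≤ 2⁻¹ * (qf B (u' - v)
        + 2 * t * ⟪z - u', mdot B (u' - v)⟫ + t ^ 2 * q) + ((1 - t) * R u' + t * R z))
      simp only [hK]
      nlinarith [this]
    nlinarith [h6, ht0]
  by_contra hneg
  push_neg at hneg
  have hqpos : (0:ℝ) < q + 1 := by linarith
  set t := min 1 (-K / (q + 1)) with htdef
  have ht0 : 0 < t := lt_min one_pos (div_pos (by linarith) hqpos)
  have ht1 : t ≤ 1 := min_le_left _ _
  have h2 : t ≤ -K / (q + 1) := min_le_right _ _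
  have h3 : t * (q + 1) ≤ -K := by
    rw [div_eq_mul_inv] at h2
    calc t * (q + 1) ≤ (-K * (q + 1)⁻¹) * (q + 1) :=
          mul_le_mul_of_nonneg_right h2 hqpos.le
      _ = -K := by field_simp
  have := ht t ht0 ht1
  nlinarith [mul_nonneg ht0.le hq]

end Helpers

/-- for `F` differentiable with `L_Ω`-Lipschitz gradient, `R` lsc convex,
`P = F + R`, `A` symmetric positive definite and `w' = prox_R^{A⁻¹}(w − Aζ)`, for every `z`:
`P(w') ≤ P(z) + ⟨w' − z, ∇F(w) − ζ⟩ + (1/2)(w'−w)ᵀ(L_Ω I − A⁻¹)(w'−w)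
 + (1/2)(z−w)ᵀ(L_Ω I + A⁻¹)(z−w) − (1/2)‖w'−z‖_{A⁻¹}²`. -/
theorem prox_step_composite_inequality {d : ℕ} (F : Euc d → ℝ) (gF : Euc d → Euc d)
    (hF : ∀ x, HasGradientAt F (gF x) x)
    (LΩ : ℝ) (hLip : ∀ x y, ‖gF x - gF y‖ ≤ LΩ * ‖x - y‖)
    (R : Euc d → ℝ) (hlsc : LowerSemicontinuous R) (hconv : ConvexOn ℝ Set.univ R)
    (A : Matrix (Fin d) (Fin d) ℝ) (hA : A.PosDef) (ζ w w' : Euc d)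
    (hprox : IsProxR R A⁻¹ (w - mdot A ζ) w') :
    ∀ z : Euc d,
      F w' + R w' ≤ F z + R z + ⟪w' - z, gF w - ζ⟫
        + 2⁻¹ * qf (LΩ • (1 : Matrix (Fin d) (Fin d) ℝ) - A⁻¹) (w' - w)
        + 2⁻¹ * qf (LΩ • (1 : Matrix (Fin d) (Fin d) ℝ) + A⁻¹) (z - w)
        - 2⁻¹ * qf A⁻¹ (w' - z) := by
  intro z
  set B := A⁻¹ with hBdef
  have hB : B.PosDef := hA.inv
  have hBH : B.IsHermitian := hB.isHermitian
  -- gradient of -F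
  have hFneg : ∀ x, HasGradientAt (fun x => -F x) (-gF x) x := by
    intro x
    have h := (hF x).hasFDerivAt.neg
    rw [← map_neg] at h
    exact (by simpa using h.hasGradientAt : HasGradientAt (-F) (-gF x) x)
  -- descent lemmas
  have Ha : F w' ≤ F w + ⟪gF w, w' - w⟫ + LΩ / 2 * ‖w' - w‖ ^ 2 :=
    descent_lemma F gF hF LΩ hLip w w'
  have Hb' : -F z ≤ -F w + ⟪-gF w, z - w⟫ + LΩ / 2 * ‖z - w‖ ^ 2 := by
    refine descent_lemma (fun x => -F x) (fun x => -gF x) hFneg LΩ ?_ w z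
    intro x y
    have : ‖-gF x - -gF y‖ = ‖gF x - gF y‖ := by
      rw [show -gF x - -gF y = -(gF x - gF y) by abel, norm_neg]
    rw [this]; exact hLip x y
  have Hb : F w ≤ F z - ⟪gF w, z - w⟫ + LΩ / 2 * ‖z - w‖ ^ 2 := by
    rw [inner_neg_left] at Hb'
    linarith
  -- prox key
  have hkey := prox_key R hconv B hB (w - mdot A ζ) w' hprox z
  -- simplify mdot B (w' - (w - mdot A ζ))
  have hAdet : IsUnit A.det := isUnit_iff_ne_zero.mpr hA.det_pos.ne'
  have hBA : mdot B (mdot A ζ) = ζ := by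
    rw [← mdot_mul, hBdef, Matrix.nonsing_inv_mul A hAdet, mdot_one]
  have e0 : w' - (w - mdot A ζ) = (w' - w) + mdot A ζ := by abel
  have e1 : mdot B (w' - (w - mdot A ζ)) = mdot B (w' - w) + ζ := by
    rw [e0, mdot_vadd, hBA]
  rw [e1, inner_add_right] at hkey
  -- abbreviations
  set a := w' - w with ha
  set b := z - w with hb
  have hzw' : z - w' = b - a := by rw [ha, hb]; abel
  have hw'z : w' - z = a - b := by rw [ha, hb]; abel
  -- quadratic identities
  have hq3 : qf B (w' - z) = qf B a - 2 * ⟪b, mdot B a⟫ + qf B b := by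
    rw [hw'z]; exact qf_sub_eq hBH a b
  -- inner products in hkey
  have hk1 : ⟪z - w', mdot B a⟫ = ⟪b, mdot B a⟫ - qf B a := by
    rw [hzw', inner_sub_left]; rw [qf]
  have hk2 : ⟪z - w', ζ⟫ = ⟪b, ζ⟫ - ⟪a, ζ⟫ := by
    rw [hzw', inner_sub_left]
  rw [hk1, hk2] at hkey
  -- the matrix quadratic forms in the goal
  rw [qf_smul_one_sub, qf_smul_one_add, hq3]
  -- the inner product in the goal
  have hgoal_inner : ⟪w' - z, gF w - ζ⟫
      = ⟪gF w, w' - w⟫ - ⟪gF w, z - w⟫ - ⟪a, ζ⟫ + ⟪b, ζ⟫ := by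
    rw [hw'z, inner_sub_left, inner_sub_right, inner_sub_right,
      real_inner_comm a (gF w), real_inner_comm b (gF w), ha, hb]
    ring
  rw [hgoal_inner]
  linarith
end

section
/- Assume the setup below, and let U = Diag(u) be a diagonal matrix with entries 0 < u^j ≤ 1/L_Ω for all j, and put u_max = max_j u^j. Fix w_t ∈ ℝ^d and v ∈ ℝ^d, and define w_{t+1} = prox_R^{U^{-1}}(w_t − U v), the full-gradient step w̄_{t+1} = prox_R^{U^{-1}}(w_t − U ∇F(w_t)), and δ = ∇F(w_t) − v. Then for any minimizer w_* of P, ‖w_{t+1} − w_*‖_{U^{-1}}² ≤ ‖w_t − w_*‖_{U^{-1}}² − 2( P(w_{t+1}) − P(w_*) ) + 2 u_max ‖δ‖₂² + 2 ⟨w̄_{t+1} − w_*, δ⟩. -/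
open scoped BigOperators RealInnerProductSpace

/-- `u` is a point of the scaled proximal operator `prox_R^M (w)`, i.e. a minimizer of
`y ↦ (1/2)‖y - w‖_M² + R y`, for an extended-real-valued `R`. -/
def IsProxE {d : ℕ} (R : Euc d → EReal) (M : Matrix (Fin d) (Fin d) ℝ) (w u : Euc d) : Prop :=
  ∀ y, ((2⁻¹ * qf M (u - w) : ℝ) : EReal) + R u ≤ ((2⁻¹ * qf M (y - w) : ℝ) : EReal) + R y

/-- Convexity of an extended-real-valued function on `ℝ^d`. -/
def ERealConvexOn {d : ℕ} (R : Euc d → EReal) : Prop :=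
  ∀ x y : Euc d, ∀ a b : ℝ, 0 ≤ a → 0 ≤ b → a + b = 1 →
    R (a • x + b • y) ≤ (a : EReal) * R x + (b : EReal) * R y

/-- Properness of an extended-real-valued function: never `-∞`, and finite somewhere. -/
def ERealProper {d : ℕ} (R : Euc d → EReal) : Prop :=
  (∀ x, R x ≠ ⊥) ∧ (∃ x, R x ≠ ⊤)

/-- The average `F = (1/n) ∑ᵢ fᵢ`. -/
noncomputable def Favg {d n : ℕ} (f : Fin n → Euc d → ℝ) (x : Euc d) : ℝ :=
  (n : ℝ)⁻¹ * ∑ i, f i x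

/-- The averaged gradient `∇F = (1/n) ∑ᵢ ∇fᵢ`. -/
noncomputable def gAvg {d n : ℕ} (gf : Fin n → Euc d → Euc d) (x : Euc d) : Euc d :=
  (n : ℝ)⁻¹ • ∑ i, gf i x

/-- The composite objective `P = F + R` with extended-real-valued `R`. -/
noncomputable def Pobj {d n : ℕ} (f : Fin n → Euc d → ℝ) (R : Euc d → EReal) (x : Euc d) :
    EReal := ((Favg f x : ℝ) : EReal) + R x

/- ### Auxiliary lemmas -/

lemma inner_euc {d : ℕ} (x y : Euc d) : ⟪x, y⟫ = ∑ j, x j * y j := by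
  simp [PiLp.inner_apply, RCLike.inner_apply, conj_trivial]
  exact Finset.sum_congr rfl fun j _ => mul_comm _ _

lemma mdot_diag_apply {d : ℕ} (c : Fin d → ℝ) (x : Euc d) (j : Fin d) :
    mdot (Matrix.diagonal c) x j = c j * x j := by
  simp [mdot, Matrix.toEuclideanLin_apply, Matrix.mulVec_diagonal]

lemma qf_diag {d : ℕ} (c : Fin d → ℝ) (x : Euc d) :
    qf (Matrix.diagonal c) x = ∑ j, c j * (x j * x j) := by
  simp [qf, inner_euc, mdot_diag_apply]; exact Finset.sum_congr rfl fun j _ => by ring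

lemma inv_diag {d : ℕ} (u : Fin d → ℝ) (hu : ∀ j, u j ≠ 0) :
    (Matrix.diagonal u)⁻¹ = Matrix.diagonal (fun j => (u j)⁻¹) := by
  apply Matrix.inv_eq_right_inv
  rw [Matrix.diagonal_mul_diagonal]
  convert Matrix.diagonal_one with j
  exact mul_inv_cancel₀ (hu j)

lemma prox_ne_top {d : ℕ} {R : Euc d → EReal} {M : Matrix (Fin d) (Fin d) ℝ} {w p : Euc d}
    (hp : IsProxE R M w p) {y0 : Euc d} (h0 : R y0 ≠ ⊤) : R p ≠ ⊤ := by
  intro h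
  have := hp y0
  rw [h, EReal.coe_add_top, top_le_iff] at this
  exact (EReal.add_lt_top (EReal.coe_ne_top _) h0).ne this

lemma prox_vi {d : ℕ} {R : Euc d → EReal} (hconvR : ERealConvexOn R) (hbot : ∀ x, R x ≠ ⊥)
    {c : Fin d → ℝ} (hc : ∀ j, 0 ≤ c j) {w p : Euc d}
    (hp : IsProxE R (Matrix.diagonal c) w p) (hptop : R p ≠ ⊤)
    {y : Euc d} (hytop : R y ≠ ⊤) :
    0 ≤ (∑ j, c j * (p j - w j) * (y j - p j)) + (R y).toReal - (R p).toReal := by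
  set rp := (R p).toReal
  set ry := (R y).toReal
  have hrp : R p = (rp : EReal) := (EReal.coe_toReal hptop (hbot p)).symm
  have hry : R y = (ry : EReal) := (EReal.coe_toReal hytop (hbot y)).symm
  set B := ∑ j, c j * (p j - w j) * (y j - p j) with hB
  set S := ∑ j, c j * ((y j - p j) * (y j - p j)) with hS
  have hS0 : 0 ≤ S := Finset.sum_nonneg fun j _ => mul_nonneg (hc j) (mul_self_nonneg _)
  have key : ∀ t : ℝ, 0 < t → t ≤ 1 → 0 ≤ B + t * (S / 2) + (ry - rp) := by
    intro t ht0 ht1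
    have hcomb : R ((1 - t) • p + t • y) ≤ (((1 - t) * rp + t * ry : ℝ) : EReal) := by
      have := hconvR p y (1 - t) t (by linarith) ht0.le (by ring)
      rw [hrp, hry] at this
      calc R ((1 - t) • p + t • y) ≤ ((1 - t : ℝ) : EReal) * (rp : EReal)
            + ((t : ℝ) : EReal) * (ry : EReal) := this
        _ = (((1 - t) * rp + t * ry : ℝ) : EReal) := by
            rw [← EReal.coe_mul, ← EReal.coe_mul, ← EReal.coe_add]
    have hprox := hp ((1 - t) • p + t • y)
    have hcoe : ((2⁻¹ * qf (Matrix.diagonal c) (p - w) + rp : ℝ) : EReal)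
        ≤ ((2⁻¹ * qf (Matrix.diagonal c) (((1 - t) • p + t • y) - w)
            + ((1 - t) * rp + t * ry) : ℝ) : EReal) := by
      rw [EReal.coe_add, EReal.coe_add, ← hrp]
      exact le_trans hprox (add_le_add (le_refl _) hcomb)
    rw [EReal.coe_le_coe_iff] at hcoe
    have hexp : qf (Matrix.diagonal c) (((1 - t) • p + t • y) - w)
        = qf (Matrix.diagonal c) (p - w) + 2 * t * B + t ^ 2 * S := by
      rw [qf_diag, qf_diag, hB, hS, Finset.mul_sum, Finset.mul_sum,
        ← Finset.sum_add_distrib, ← Finset.sum_add_distrib]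
      refine Finset.sum_congr rfl fun j _ => ?_
      have h1 : (((1 - t) • p + t • y) - w) j = (p j - w j) + t * (y j - p j) := by
        simp [PiLp.add_apply, PiLp.sub_apply, PiLp.smul_apply, smul_eq_mul]
        ring
      have h2 : (p - w) j = p j - w j := rfl
      rw [h1, h2]
      ring
    rw [hexp] at hcoe
    nlinarith [hcoe]
  have main : 0 ≤ B + (ry - rp) := by
    have h2 : ∀ ε : ℝ, 0 < ε → -(B + (ry - rp)) ≤ 0 + ε := by
      intro ε hε
      set t : ℝ := min 1 (ε / (S / 2 + 1)) with htdef
      have hd : 0 < S / 2 + 1 := by linarith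
      have ht0 : 0 < t := lt_min one_pos (div_pos hε hd)
      have ht1 : t ≤ 1 := min_le_left _ _
      have hk := key t ht0 ht1
      have htle : t ≤ ε / (S / 2 + 1) := min_le_right _ _
      have : t * (S / 2) ≤ ε := by
        calc t * (S / 2) ≤ (ε / (S / 2 + 1)) * (S / 2 + 1) := by
              apply mul_le_mul htle (by linarith) (by linarith) (le_of_lt (div_pos hε hd))
          _ = ε := div_mul_cancel₀ _ hd.ne'
      linarith
    have := le_of_forall_pos_le_add h2
    linarith
  linarith

lemma line_deriv {d : ℕ} {f : Euc d → ℝ} {g : Euc d → Euc d}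
    (hg : ∀ x, HasGradientAt f (g x) x) (x v : Euc d) (t : ℝ) :
    HasDerivAt (fun s : ℝ => f (x + s • v)) ⟪g (x + t • v), v⟫ t := by
  have h1 : HasDerivAt (fun s : ℝ => x + s • v) v t := by
    simpa using ((hasDerivAt_id t).smul_const v).const_add x
  have h2 := (hg (x + t • v)).hasFDerivAt
  have h3 := h2.comp_hasDerivAt t h1
  simpa [InnerProductSpace.toDual_apply_apply, Function.comp_def] using h3

lemma grad_convex_ineq {d : ℕ} {f : Euc d → ℝ} {gx : Euc d} {x : Euc d}
    (hconv : ConvexOn ℝ Set.univ f) (hx : HasGradientAt f gx x) (y : Euc d) :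
    f x + ⟪gx, y - x⟫ ≤ f y := by
  set v := y - x with hv
  have hφ : HasDerivAt (fun s : ℝ => f (x + s • v)) ⟪gx, v⟫ 0 := by
    have h1 : HasDerivAt (fun s : ℝ => x + s • v) v (0 : ℝ) := by
      simpa using ((hasDerivAt_id (0:ℝ)).smul_const v).const_add x
    have h2 := hx.hasFDerivAt
    have h2' : HasFDerivAt f (InnerProductSpace.toDual ℝ _ gx) (x + (0:ℝ) • v) := by
      simpa using h2
    simpa [InnerProductSpace.toDual_apply_apply, Function.comp_def] using h2'.comp_hasDerivAt 0 h1
  have hslope := hasDerivAt_iff_tendsto_slope.1 hφ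
  have hslope2 : Filter.Tendsto (slope (fun s : ℝ => f (x + s • v)) 0)
      (nhdsWithin 0 (Set.Ioi 0)) (nhds ⟪gx, v⟫) :=
    hslope.mono_left (nhdsWithin_mono _ (fun s hs => ne_of_gt hs))
  have hbound : ∀ᶠ s in nhdsWithin (0:ℝ) (Set.Ioi 0),
      slope (fun s : ℝ => f (x + s • v)) 0 s ≤ f y - f x := by
    filter_upwards [Ioc_mem_nhdsGT_of_mem
      (by constructor <;> norm_num : (0:ℝ) ∈ Set.Ico 0 1)] with s hs
    have hs0 : 0 < s := hs.1
    have hs1 : s ≤ 1 := hs.2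
    have hcx : f (x + s • v) ≤ (1 - s) * f x + s * f y := by
      have h := hconv.2 (Set.mem_univ x) (Set.mem_univ y)
        (by linarith : (0:ℝ) ≤ 1 - s) hs0.le (by ring)
      have hxy : (1 - s) • x + s • y = x + s • v := by rw [hv]; module
      rwa [hxy] at h
    rw [slope_def_field]
    have h0v : (x + (0:ℝ) • v) = x := by simp
    rw [h0v, sub_zero, div_le_iff₀ hs0]
    nlinarith [hcx]
  have hle : ⟪gx, v⟫ ≤ f y - f x := le_of_tendsto hslope2 hbound
  linarith

lemma descent_ineq {d : ℕ} {f : Euc d → ℝ} {g : Euc d → Euc d} {L : ℝ}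
    (hg : ∀ x, HasGradientAt f (g x) x)
    (hLip : ∀ a b, ‖g a - g b‖ ≤ L * ‖a - b‖) (x y : Euc d) :
    f y ≤ f x + ⟪g x, y - x⟫ + L / 2 * ‖y - x‖ ^ 2 := by
  set v := y - x with hv
  set ψ : ℝ → ℝ := fun s => f (x + s • v) - s * ⟪g x, v⟫ - L * s ^ 2 / 2 * ‖v‖ ^ 2 with hψ
  have hψd : ∀ s : ℝ, HasDerivAt ψ (⟪g (x + s • v), v⟫ - ⟪g x, v⟫ - L * s * ‖v‖ ^ 2) s := by
    intro s
    have h1 := line_deriv hg x v s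
    have h2 : HasDerivAt (fun s : ℝ => s * ⟪g x, v⟫) ⟪g x, v⟫ s := by
      simpa using (hasDerivAt_id s).mul_const ⟪g x, v⟫
    have h3 : HasDerivAt (fun s : ℝ => L * s ^ 2 / 2 * ‖v‖ ^ 2) (L * s * ‖v‖ ^ 2) s := by
      have := ((hasDerivAt_pow 2 s).const_mul L).div_const 2
      have h4 := this.mul_const (‖v‖ ^ 2)
      exact h4.congr_deriv (by rw [show (2:ℕ) - 1 = 1 from rfl]; push_cast; ring)
    exact (h1.sub h2).sub h3
  have hderiv_nonpos : ∀ s ∈ Set.Ioo (0:ℝ) 1, deriv ψ s ≤ 0 := by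
    intro s hs
    rw [(hψd s).deriv]
    have hinner : ⟪g (x + s • v) - g x, v⟫ ≤ ‖g (x + s • v) - g x‖ * ‖v‖ :=
      real_inner_le_norm _ _
    have hlip := hLip (x + s • v) x
    have hn : ‖x + s • v - x‖ = s * ‖v‖ := by
      simp [norm_smul, abs_of_pos hs.1]
    rw [hn] at hlip
    have h5 : ⟪g (x + s • v) - g x, v⟫ = ⟪g (x + s • v), v⟫ - ⟪g x, v⟫ :=
      inner_sub_left _ _ _
    nlinarith [norm_nonneg v, norm_nonneg (g (x + s • v) - g x), hs.1.le]
  have hanti : AntitoneOn ψ (Set.Icc (0:ℝ) 1) := by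
    apply antitoneOn_of_deriv_nonpos (convex_Icc 0 1)
    · exact Continuous.continuousOn
        (continuous_iff_continuousAt.2 fun s => (hψd s).continuousAt)
    · intro s hs
      exact (hψd s).differentiableAt.differentiableWithinAt
    · intro s hs
      rw [interior_Icc] at hs
      exact hderiv_nonpos s hs
  have h01 := hanti (Set.left_mem_Icc.2 zero_le_one) (Set.right_mem_Icc.2 zero_le_one)
    zero_le_one
  have hψ0 : ψ 0 = f x := by simp [hψ]
  have hψ1 : ψ 1 = f y - ⟪g x, v⟫ - L / 2 * ‖v‖ ^ 2 := by
    have hxy : x + (1:ℝ) • v = y := by rw [hv]; module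
    show f (x + (1:ℝ) • v) - 1 * ⟪g x, v⟫ - L * 1 ^ 2 / 2 * ‖v‖ ^ 2
        = f y - ⟪g x, v⟫ - L / 2 * ‖v‖ ^ 2
    rw [hxy]; ring
  rw [hψ0, hψ1] at h01
  linarith
/-- with the finite-sum setup and `U = Diag(u)`, `0 < uʲ ≤ 1/L_Ω`,
`w_{t+1} = prox_R^{U⁻¹}(w_t − Uv)`, `w̄_{t+1} = prox_R^{U⁻¹}(w_t − U∇F(w_t))`,
`δ = ∇F(w_t) − v`, for any minimizer `w_*` of `P`:
`‖w_{t+1} − w_*‖_{U⁻¹}² ≤ ‖w_t − w_*‖_{U⁻¹}² − 2(P(w_{t+1}) − P(w_*)) + 2u_max‖δ‖₂²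
 + 2⟨w̄_{t+1} − w_*, δ⟩`. -/
theorem distance_decrease_bound {d n : ℕ} (hn : 0 < n)
    (f : Fin n → Euc d → ℝ) (gf : Fin n → Euc d → Euc d)
    (hgrad : ∀ i x, HasGradientAt (f i) (gf i x) x)
    (hconvf : ∀ i, ConvexOn ℝ Set.univ (f i))
    (L : Fin n → ℝ) (hLip : ∀ i x y, ‖gf i x - gf i y‖ ≤ L i * ‖x - y‖)
    (q : Fin n → ℝ) (hq : ∀ i, 0 < q i) (hqs : ∑ i, q i = 1)
    (LΩ : ℝ) (hLΩ : IsGreatest (Set.range fun i => L i / ((n : ℝ) * q i)) LΩ)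
    (R : Euc d → EReal) (hproper : ERealProper R) (hlsc : LowerSemicontinuous R)
    (hconvR : ERealConvexOn R)
    (u : Fin d → ℝ) (hu : ∀ j, 0 < u j ∧ u j ≤ 1 / LΩ)
    (umax : ℝ) (humax : IsGreatest (Set.range u) umax)
    (wt v wnext wbar : Euc d)
    (hnext : IsProxE R (Matrix.diagonal u)⁻¹ (wt - mdot (Matrix.diagonal u) v) wnext)
    (hbar : IsProxE R (Matrix.diagonal u)⁻¹
      (wt - mdot (Matrix.diagonal u) (gAvg gf wt)) wbar)
    (wstar : Euc d) (hstar : ∀ y, Pobj f R wstar ≤ Pobj f R y) :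
    ((qf (Matrix.diagonal u)⁻¹ (wnext - wstar) : ℝ) : EReal)
      ≤ ((qf (Matrix.diagonal u)⁻¹ (wt - wstar)
            + 2 * umax * ‖gAvg gf wt - v‖ ^ 2
            + 2 * ⟪wbar - wstar, gAvg gf wt - v⟫ : ℝ) : EReal)
        - 2 * (Pobj f R wnext - Pobj f R wstar) := by
  obtain ⟨x0, hx0⟩ := hproper.2
  have hbot := hproper.1
  have hu0 : ∀ j, 0 < u j := fun j => (hu j).1
  set c : Fin d → ℝ := fun j => (u j)⁻¹ with hcdef
  have hcpos : ∀ j : Fin d, 0 < c j := fun j => inv_pos.2 (hu0 j)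
  have hcu : ∀ j, c j * u j = 1 := fun j => inv_mul_cancel₀ (hu0 j).ne'
  have hMinv : (Matrix.diagonal u)⁻¹ = Matrix.diagonal c := inv_diag u fun j => (hu0 j).ne'
  rw [hMinv] at hnext hbar ⊢
  set g : Euc d := gAvg gf wt with hgdef
  -- positivity of LΩ and umax
  obtain ⟨j0, hj0⟩ := humax.1
  have hLΩpos : 0 < LΩ := by
    by_contra h
    push_neg at h
    have h1 : 1 / LΩ ≤ 0 := one_div_nonpos.2 h
    exact absurd ((hu j0).2.trans h1) (not_le.2 (hu0 j0))
  -- Lsum facts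
  set Lsum : ℝ := (n : ℝ)⁻¹ * ∑ i, L i with hLsum
  have hnpos : (0:ℝ) < n := by exact_mod_cast hn
  have hLle : Lsum ≤ LΩ := by
    have h1 : ∀ i : Fin n, (n:ℝ)⁻¹ * L i ≤ q i * LΩ := by
      intro i
      have h2 : L i / ((n : ℝ) * q i) ≤ LΩ := hLΩ.2 ⟨i, rfl⟩
      rw [div_le_iff₀ (mul_pos hnpos (hq i))] at h2
      have h4 := mul_le_mul_of_nonneg_left h2 (inv_nonneg.2 hnpos.le)
      have h5 : (n:ℝ)⁻¹ * (LΩ * ((n:ℝ) * q i)) = q i * LΩ := by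
        field_simp
      linarith
    calc Lsum = ∑ i, (n:ℝ)⁻¹ * L i := Finset.mul_sum _ _ _
      _ ≤ ∑ i, q i * LΩ := Finset.sum_le_sum fun i _ => h1 i
      _ = (∑ i, q i) * LΩ := (Finset.sum_mul _ _ _).symm
      _ = LΩ := by rw [hqs, one_mul]
  have hLc : ∀ j, Lsum ≤ c j := by
    intro j
    have h1 : u j * LΩ ≤ 1 := (le_div_iff₀ hLΩpos).1 (hu j).2
    have h2 : LΩ ≤ 1 / u j := (le_div_iff₀ (hu0 j)).2 (by linarith)
    rw [one_div] at h2
    exact le_trans hLle h2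
  -- finiteness of R at the relevant points
  have hsTop : R wstar ≠ ⊤ := by
    intro h
    have h2 := hstar x0
    simp only [Pobj] at h2
    rw [h, EReal.coe_add_top, top_le_iff] at h2
    exact (EReal.add_lt_top (EReal.coe_ne_top _) hx0).ne h2
  have hnTop : R wnext ≠ ⊤ := prox_ne_top hnext hsTop
  have hbTop : R wbar ≠ ⊤ := prox_ne_top hbar hsTop
  have hrn : R wnext = ((R wnext).toReal : EReal) := (EReal.coe_toReal hnTop (hbot wnext)).symm
  have hrs : R wstar = ((R wstar).toReal : EReal) := (EReal.coe_toReal hsTop (hbot wstar)).symm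
  -- atoms
  set St := ∑ j, c j * ((wt j - wstar j) * (wt j - wstar j)) with hSt
  set Sn := ∑ j, c j * ((wnext j - wstar j) * (wnext j - wstar j)) with hSn
  set SD := ∑ j, c j * ((wnext j - wt j) * (wnext j - wt j)) with hSD
  set Q := ∑ j, c j * ((wnext j - wbar j) * (wnext j - wbar j)) with hQ
  set T := ∑ j, c j * (wnext j - wt j) * (wnext j - wstar j) with hT
  set A := ∑ j, g j * (wstar j - wt j) with hA
  set Bg := ∑ j, g j * (wnext j - wt j) with hBg
  set I1 := ∑ j, (g j - v j) * (wnext j - wbar j) with hI1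
  set I2 := ∑ j, (wbar j - wstar j) * (g j - v j) with hI2
  set D := ∑ j, (g j - v j) * (g j - v j) with hD
  set W := ∑ j, u j * ((g j - v j) * (g j - v j)) with hW
  have hwv : ∀ j, (wt - mdot (Matrix.diagonal u) v) j = wt j - u j * v j := by
    intro j
    rw [show (wt - mdot (Matrix.diagonal u) v) j
      = wt j - mdot (Matrix.diagonal u) v j from rfl, mdot_diag_apply]
  have hwg : ∀ j, (wt - mdot (Matrix.diagonal u) g) j = wt j - u j * g j := by
    intro j
    rw [show (wt - mdot (Matrix.diagonal u) g) j
      = wt j - mdot (Matrix.diagonal u) g j from rfl, mdot_diag_apply]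
  -- VI at wnext with y = wstar
  have vi1 := prox_vi hconvR hbot (fun j => (hcpos j).le) hnext hnTop (y := wstar) hsTop
  have e1 : (∑ j, c j * (wnext j - (wt - mdot (Matrix.diagonal u) v) j)
      * (wstar j - wnext j)) = ((((A - T) - Bg) + I1) + I2) := by
    rw [hA, hT, hBg, hI1, hI2, ← Finset.sum_sub_distrib, ← Finset.sum_sub_distrib,
      ← Finset.sum_add_distrib, ← Finset.sum_add_distrib]
    refine Finset.sum_congr rfl fun j _ => ?_
    rw [hwv j]
    linear_combination (v j * (wstar j - wnext j)) * hcu j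
  rw [e1] at vi1
  -- VI at wnext with y = wbar, and at wbar with y = wnext
  have vi2 := prox_vi hconvR hbot (fun j => (hcpos j).le) hnext hnTop (y := wbar) hbTop
  have vi3 := prox_vi hconvR hbot (fun j => (hcpos j).le) hbar hbTop (y := wnext) hnTop
  have e2 : (∑ j, c j * (wnext j - (wt - mdot (Matrix.diagonal u) v) j)
        * (wbar j - wnext j))
      + (∑ j, c j * (wbar j - (wt - mdot (Matrix.diagonal u) g) j)
        * (wnext j - wbar j)) = I1 - Q := by
    rw [hI1, hQ, ← Finset.sum_sub_distrib, ← Finset.sum_add_distrib]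
    refine Finset.sum_congr rfl fun j _ => ?_
    rw [hwv j, hwg j]
    linear_combination ((g j - v j) * (wnext j - wbar j)) * hcu j
  have hQI : Q ≤ I1 := by linarith [vi2, vi3, e2]
  -- AM-GM per coordinate
  have hAM : 2 * I1 ≤ W + Q := by
    rw [hI1, hW, hQ, ← Finset.sum_add_distrib, Finset.mul_sum]
    refine Finset.sum_le_sum fun j _ => ?_
    have hc' : c j = (u j)⁻¹ := rfl
    have hne : u j ≠ 0 := (hu0 j).ne'
    have hkey : (u j)⁻¹ * (u j * (g j - v j) - (wnext j - wbar j)) ^ 2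
        = u j * ((g j - v j) * (g j - v j))
          + (u j)⁻¹ * ((wnext j - wbar j) * (wnext j - wbar j))
          - 2 * ((g j - v j) * (wnext j - wbar j)) := by
      field_simp
      ring
    have hnn := mul_nonneg (inv_nonneg.2 (hu0 j).le)
      (sq_nonneg (u j * (g j - v j) - (wnext j - wbar j)))
    rw [hc']
    linarith [hkey, hnn]
  have hWD : W ≤ umax * D := by
    rw [hW, hD, Finset.mul_sum]
    exact Finset.sum_le_sum fun j _ =>
      mul_le_mul_of_nonneg_right (humax.2 ⟨j, rfl⟩) (mul_self_nonneg _)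
  have hF5 : I1 ≤ umax * D := by linarith
  -- quadratic identity
  have hF1 : Sn = St + 2 * T - SD := by
    rw [hSn, hSt, hT, hSD, Finset.mul_sum, ← Finset.sum_add_distrib,
      ← Finset.sum_sub_distrib]
    exact Finset.sum_congr rfl fun j _ => by ring
  -- convexity of F
  have hA' : ⟪g, wstar - wt⟫ = A := by
    rw [inner_euc, hA]
    exact Finset.sum_congr rfl fun j _ => rfl
  have hBg' : ⟪g, wnext - wt⟫ = Bg := by
    rw [inner_euc, hBg]
    exact Finset.sum_congr rfl fun j _ => rfl
  have hinner_avg : ∀ z : Euc d, ⟪g, z⟫ = (n:ℝ)⁻¹ * ∑ i, ⟪gf i wt, z⟫ := by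
    intro z
    rw [hgdef]
    show ⟪(n : ℝ)⁻¹ • ∑ i, gf i wt, z⟫ = _
    rw [real_inner_smul_left, sum_inner]
  have hnn : (0:ℝ) ≤ (n:ℝ)⁻¹ := inv_nonneg.2 (Nat.cast_nonneg n)
  have hF3 : Favg f wt + A ≤ Favg f wstar := by
    have hci : ∀ i : Fin n, f i wt + ⟪gf i wt, wstar - wt⟫ ≤ f i wstar := fun i =>
      grad_convex_ineq (hconvf i) (hgrad i wt) wstar
    have hsum := mul_le_mul_of_nonneg_left
      (Finset.sum_le_sum fun i (_ : i ∈ Finset.univ) => hci i) hnn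
    rw [Finset.sum_add_distrib, mul_add] at hsum
    have h7 : Favg f wt = (n:ℝ)⁻¹ * ∑ i, f i wt := rfl
    have h8 : Favg f wstar = (n:ℝ)⁻¹ * ∑ i, f i wstar := rfl
    have h9 := hinner_avg (wstar - wt)
    rw [hA'] at h9
    linarith [hsum]
  -- descent for F
  have hnormD : ‖wnext - wt‖ ^ 2 = ∑ j, (wnext j - wt j) * (wnext j - wt j) := by
    rw [← real_inner_self_eq_norm_sq, inner_euc]
    exact Finset.sum_congr rfl fun j _ => rfl
  have hF4 : Favg f wnext ≤ Favg f wt + Bg + SD / 2 := by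
    have hdi : ∀ i : Fin n, f i wnext
        ≤ f i wt + ⟪gf i wt, wnext - wt⟫ + L i / 2 * ‖wnext - wt‖ ^ 2 := fun i =>
      descent_ineq (hgrad i) (hLip i) wt wnext
    have hsum := mul_le_mul_of_nonneg_left
      (Finset.sum_le_sum fun i (_ : i ∈ Finset.univ) => hdi i) hnn
    rw [Finset.sum_add_distrib, Finset.sum_add_distrib, mul_add, mul_add] at hsum
    have h7 : Favg f wnext = (n:ℝ)⁻¹ * ∑ i, f i wnext := rfl
    have h8 : Favg f wt = (n:ℝ)⁻¹ * ∑ i, f i wt := rfl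
    have h9 := hinner_avg (wnext - wt)
    rw [hBg'] at h9
    have h10 : (n:ℝ)⁻¹ * ∑ i, L i / 2 * ‖wnext - wt‖ ^ 2
        = Lsum / 2 * ‖wnext - wt‖ ^ 2 := by
      rw [← Finset.sum_mul, ← Finset.sum_div, hLsum]
      ring
    have h11 : Lsum * (∑ j, (wnext j - wt j) * (wnext j - wt j)) ≤ SD := by
      rw [hSD, Finset.mul_sum]
      exact Finset.sum_le_sum fun j _ =>
        mul_le_mul_of_nonneg_right (hLc j) (mul_self_nonneg _)
    rw [hnormD] at hsum h10
    linarith [hsum, h10, h11]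
  -- convert the goal to a real inequality
  have hPd : Pobj f R wnext - Pobj f R wstar
      = (((Favg f wnext + (R wnext).toReal) - (Favg f wstar + (R wstar).toReal) : ℝ)
        : EReal) := by
    simp only [Pobj]
    rw [hrn, hrs, ← EReal.coe_add, ← EReal.coe_add, ← EReal.coe_sub]
    simp [EReal.toReal_coe]
  have h2e : (2 : EReal) = ((2:ℝ) : EReal) := by norm_cast
  rw [hPd, h2e, ← EReal.coe_mul, ← EReal.coe_sub, EReal.coe_le_coe_iff]
  have gSn : qf (Matrix.diagonal c) (wnext - wstar) = Sn := by
    rw [qf_diag, hSn]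
    exact Finset.sum_congr rfl fun j _ => rfl
  have gSt : qf (Matrix.diagonal c) (wt - wstar) = St := by
    rw [qf_diag, hSt]
    exact Finset.sum_congr rfl fun j _ => rfl
  have gD : ‖g - v‖ ^ 2 = D := by
    rw [← real_inner_self_eq_norm_sq, inner_euc, hD]
    exact Finset.sum_congr rfl fun j _ => rfl
  have gI2 : ⟪wbar - wstar, g - v⟫ = I2 := by
    rw [inner_euc, hI2]
    exact Finset.sum_congr rfl fun j _ => rfl
  rw [gSn, gSt, gD, gI2]
  linarith [hF1, vi1, hF3, hF4, hF5, hQI]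
end
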